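/- Let X ∈ ℝ^{d×n}, let L(A, B) = ‖X − A B X‖_F² for A ∈ ℝ^{d×k}, B ∈ ℝ^{k×d}, and let (A(t), B(t)), t ≥ 0, be a differentiable curve satisfying the gradient flow equations A′(t) = −∇_A L(A(t), B(t)) and B′(t) = −∇_B L(A(t), B(t)). Then the quantity A(t)ᵀ A(t) − B(t) B(t)ᵀ is constant in t; that is, A(t)ᵀ A(t) − B(t) B(t)ᵀ = A(0)ᵀ A(0) − B(0) B(0)ᵀ for all t ≥ 0. -/

import Mathlib

open Matrix

/-- The space of `m × n` real matrices with the Frobenius inner product, realized as a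
Euclidean space. -/
abbrev EMat (m n : ℕ) := EuclideanSpace ℝ (Fin m × Fin n)

/-- Interpret an element of `EMat m n` as a matrix. -/
def toMat {m n : ℕ} (v : EMat m n) : Matrix (Fin m) (Fin n) ℝ :=
  Matrix.of fun i j => v (i, j)

/-- The squared Frobenius norm of a matrix. -/
def frobSq {m n : ℕ} (M : Matrix (Fin m) (Fin n) ℝ) : ℝ :=
  ∑ i, ∑ j, M i j ^ 2

lemma sum_swap3 {α β γ : Type*} [Fintype α] [Fintype β] [Fintype γ]
    (f : α → β → γ → ℝ) :
    ∑ x, ∑ y, ∑ z, f x y z = ∑ z, ∑ x, ∑ y, f x y z :=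
  (Finset.sum_congr rfl fun _ _ => Finset.sum_comm).trans Finset.sum_comm

lemma sum_swap4 {α β γ δ : Type*} [Fintype α] [Fintype β] [Fintype γ] [Fintype δ]
    (f : α → β → γ → δ → ℝ) :
    ∑ x, ∑ y, ∑ z, ∑ w, f x y z w = ∑ z, ∑ w, ∑ x, ∑ y, f x y z w := by
  calc ∑ x, ∑ y, ∑ z, ∑ w, f x y z w
      = ∑ z, ∑ x, ∑ y, ∑ w, f x y z w := sum_swap3 (fun x y z => ∑ w, f x y z w)
    _ = ∑ z, ∑ w, ∑ x, ∑ y, f x y z w :=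
        Finset.sum_congr rfl fun z _ => sum_swap3 (fun x y w => f x y z w)

lemma gradA {d n k : ℕ} (X : Matrix (Fin d) (Fin n) ℝ) (b : EMat k d) (a : EMat d k) :
    HasGradientAt (fun a' => frobSq (X - toMat a' * toMat b * X))
      ((WithLp.equiv 2 _).symm fun q : Fin d × Fin k =>
        -2 * ∑ j, (X - toMat a * toMat b * X) q.1 j * (toMat b * X) q.2 j) a := by
  set C := toMat b * X with hC
  have hfun : (fun a' : EMat d k => frobSq (X - toMat a' * toMat b * X))
      = fun a' => ∑ i, ∑ j, (X i j - ∑ p, a' (i, p) * C p j) *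
          (X i j - ∑ p, a' (i, p) * C p j) := by
    funext a'
    simp [frobSq, toMat, Matrix.mul_assoc, Matrix.mul_apply, hC, pow_two]
  rw [hfun, hasGradientAt_iff_hasFDerivAt]
  have hlin : ∀ (i : Fin d) (j : Fin n),
      HasFDerivAt (𝕜 := ℝ) (fun a' : EMat d k => X i j - ∑ p, a' (i, p) * C p j)
      (-(∑ p : Fin k, C p j • (EuclideanSpace.proj ((i, p) : Fin d × Fin k) (𝕜 := ℝ)))) a := by
    intro i j
    apply HasFDerivAt.const_sub
    exact HasFDerivAt.fun_sum fun p _ =>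
      (EuclideanSpace.proj ((i, p) : Fin d × Fin k) (𝕜 := ℝ)).hasFDerivAt.mul_const (C p j)
  have h2 := fun i j => (hlin i j).mul (hlin i j)
  have := HasFDerivAt.fun_sum (u := Finset.univ)
    (fun i (_ : i ∈ Finset.univ) => HasFDerivAt.fun_sum (u := Finset.univ)
      (fun j (_ : j ∈ Finset.univ) => h2 i j))
  refine this.congr_fderiv (Eq.symm ?_)
  ext v
  simp [PiLp.inner_apply, Fintype.sum_prod_type, Finset.mul_sum, Finset.sum_mul,
    Matrix.sub_apply, Matrix.mul_apply, toMat, hC, mul_assoc, mul_comm, mul_left_comm]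
  have hE : ∀ (x : Fin d) (m : Fin n),
      (∑ x4 : Fin d, ∑ x5 : Fin k, X x4 m * (b (x5, x4) * a (x, x5)))
      = ∑ x4 : Fin k, ∑ x5 : Fin d, X x5 m * (b (x4, x5) * a (x, x4)) :=
    fun x m => Finset.sum_comm
  simp only [hE]
  rw [neg_eq_iff_eq_neg]
  simp only [neg_add, neg_neg, ← Finset.sum_neg_distrib]
  refine Finset.sum_congr rfl fun x _ => ?_
  rw [Finset.sum_comm]
  refine Finset.sum_congr rfl fun m _ => ?_
  rw [← two_mul, Finset.mul_sum]
  refine Finset.sum_congr rfl fun p _ => ?_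
  rw [Finset.mul_sum]
  refine Finset.sum_congr rfl fun l _ => ?_
  ring

lemma gradB {d n k : ℕ} (X : Matrix (Fin d) (Fin n) ℝ) (a : EMat d k) (b : EMat k d) :
    HasGradientAt (fun b' => frobSq (X - toMat a * toMat b' * X))
      ((WithLp.equiv 2 _).symm fun q : Fin k × Fin d =>
        -2 * ∑ i, ∑ j, (X - toMat a * toMat b * X) i j * (a (i, q.1) * X q.2 j)) b := by
  have hfun : (fun b' : EMat k d => frobSq (X - toMat a * toMat b' * X))
      = fun b' => ∑ i, ∑ j, (X i j - ∑ p, ∑ q, a (i, p) * (b' (p, q) * X q j)) *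
          (X i j - ∑ p, ∑ q, a (i, p) * (b' (p, q) * X q j)) := by
    funext b'
    simp [frobSq, toMat, Matrix.mul_assoc, Matrix.mul_apply, pow_two, Finset.mul_sum]
  rw [hfun, hasGradientAt_iff_hasFDerivAt]
  have hlin : ∀ (i : Fin d) (j : Fin n),
      HasFDerivAt (𝕜 := ℝ) (fun b' : EMat k d => X i j - ∑ p, ∑ q, a (i, p) * (b' (p, q) * X q j))
      (-(∑ p : Fin k, ∑ q : Fin d, (a (i, p) * X q j) •
          (EuclideanSpace.proj ((p, q) : Fin k × Fin d) (𝕜 := ℝ)))) b := by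
    intro i j
    apply HasFDerivAt.const_sub
    refine HasFDerivAt.fun_sum fun p _ => HasFDerivAt.fun_sum fun q _ => ?_
    have h := ((EuclideanSpace.proj ((p, q) : Fin k × Fin d) (𝕜 := ℝ)).hasFDerivAt
      (x := b)).mul_const (X q j) |>.const_mul (a (i, p))
    rw [smul_smul] at h
    exact h
  have h2 := fun i j => (hlin i j).mul (hlin i j)
  have := HasFDerivAt.fun_sum (u := Finset.univ)
    (fun i (_ : i ∈ Finset.univ) => HasFDerivAt.fun_sum (u := Finset.univ)
      (fun j (_ : j ∈ Finset.univ) => h2 i j))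
  refine this.congr_fderiv (Eq.symm ?_)
  ext v
  simp [PiLp.inner_apply, Fintype.sum_prod_type, Finset.mul_sum, Finset.sum_mul,
    Matrix.sub_apply, Matrix.mul_apply, toMat, mul_assoc, mul_comm, mul_left_comm]
  have hE : ∀ (i : Fin d) (m : Fin n),
      (∑ l : Fin d, ∑ p : Fin k, X l m * (a (i, p) * b (p, l)))
      = ∑ p : Fin k, ∑ l : Fin d, X l m * (a (i, p) * b (p, l)) := fun _ _ => Finset.sum_comm
  simp only [hE]
  rw [neg_eq_iff_eq_neg]
  simp only [neg_add, neg_neg, ← Finset.sum_neg_distrib]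
  rw [sum_swap4]
  refine Finset.sum_congr rfl fun i _ => ?_
  refine Finset.sum_congr rfl fun j _ => ?_
  rw [← two_mul, Finset.mul_sum]
  refine Finset.sum_congr rfl fun p _ => ?_
  rw [Finset.mul_sum]
  refine Finset.sum_congr rfl fun q _ => ?_
  ring

lemma keyident {d n k : ℕ} (E X : Matrix (Fin d) (Fin n) ℝ)
    (a : EMat d k) (bb : EMat k d) (i j : Fin k) :
    (∑ l, ((2 * ∑ m, E l m * (toMat bb * X) i m) * a (l, j)
        + a (l, i) * (2 * ∑ m, E l m * (toMat bb * X) j m)))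
    - (∑ q, ((2 * ∑ l, ∑ m, E l m * (a (l, i) * X q m)) * bb (j, q)
        + bb (i, q) * (2 * ∑ l, ∑ m, E l m * (a (l, j) * X q m)))) = 0 := by
  have h14 : ∑ l, (2 * ∑ m, E l m * (toMat bb * X) i m) * a (l, j)
      = ∑ q, bb (i, q) * (2 * ∑ l, ∑ m, E l m * (a (l, j) * X q m)) := by
    simp only [Matrix.mul_apply, toMat, Matrix.of_apply, Finset.sum_mul, Finset.mul_sum]
    rw [sum_swap3]
    exact Finset.sum_congr rfl fun q _ => Finset.sum_congr rfl fun l _ =>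
      Finset.sum_congr rfl fun m _ => by ring
  have h23 : ∑ l, a (l, i) * (2 * ∑ m, E l m * (toMat bb * X) j m)
      = ∑ q, (2 * ∑ l, ∑ m, E l m * (a (l, i) * X q m)) * bb (j, q) := by
    simp only [Matrix.mul_apply, toMat, Matrix.of_apply, Finset.sum_mul, Finset.mul_sum]
    rw [sum_swap3]
    exact Finset.sum_congr rfl fun q _ => Finset.sum_congr rfl fun l _ =>
      Finset.sum_congr rfl fun m _ => by ring
  simp only [Finset.sum_add_distrib]
  rw [h14, h23]
  ring

/-- Along the gradient flow of `L(A, B) = ‖X − A B X‖_F²`, the quantity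
`AᵀA − BBᵀ` is conserved: `A(t)ᵀA(t) − B(t)B(t)ᵀ = A(0)ᵀA(0) − B(0)B(0)ᵀ` for all `t ≥ 0`. -/
theorem stmt11 {d n k : ℕ} (X : Matrix (Fin d) (Fin n) ℝ)
    (L : EMat d k → EMat k d → ℝ)
    (hL : ∀ vA vB, L vA vB = frobSq (X - toMat vA * toMat vB * X))
    (A : ℝ → EMat d k) (B : ℝ → EMat k d)
    (hflowA : ∀ t : ℝ, 0 ≤ t →
      HasDerivAt A (-gradient (fun a => L a (B t)) (A t)) t)
    (hflowB : ∀ t : ℝ, 0 ≤ t →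
      HasDerivAt B (-gradient (fun b => L (A t) b) (B t)) t) :
    ∀ t : ℝ, 0 ≤ t →
      (toMat (A t))ᵀ * toMat (A t) - toMat (B t) * (toMat (B t))ᵀ =
        (toMat (A 0))ᵀ * toMat (A 0) - toMat (B 0) * (toMat (B 0))ᵀ := by
  intro t ht
  ext i j
  set F : ℝ → ℝ := fun s => (∑ l, A s (l, i) * A s (l, j)) - ∑ l, B s (i, l) * B s (j, l)
    with hF
  have key : ∀ s : ℝ, 0 ≤ s → HasDerivAt F 0 s := by
    intro s hs
    have hA := hflowA s hs
    have hB := hflowB s hs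
    have e1 : (fun a => L a (B s)) = fun a => frobSq (X - toMat a * toMat (B s) * X) :=
      funext fun a => hL a (B s)
    have e2 : (fun b => L (A s) b) = fun b => frobSq (X - toMat (A s) * toMat b * X) :=
      funext fun b => hL (A s) b
    rw [e1, (gradA X (B s) (A s)).gradient] at hA
    rw [e2, (gradB X (A s) (B s)).gradient] at hB
    have hAe : ∀ q : Fin d × Fin k, HasDerivAt (fun s' => A s' q)
        (2 * ∑ m, (X - toMat (A s) * toMat (B s) * X) q.1 m * (toMat (B s) * X) q.2 m) s := by
      intro q
      have h := (EuclideanSpace.proj q (𝕜 := ℝ)).hasFDerivAt.comp_hasDerivAt s hA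
      simpa [Function.comp_def, neg_mul] using h
    have hBe : ∀ q : Fin k × Fin d, HasDerivAt (fun s' => B s' q)
        (2 * ∑ l, ∑ m, (X - toMat (A s) * toMat (B s) * X) l m * (A s (l, q.1) * X q.2 m)) s := by
      intro q
      have h := (EuclideanSpace.proj q (𝕜 := ℝ)).hasFDerivAt.comp_hasDerivAt s hB
      simpa [Function.comp_def, neg_mul] using h
    have hF1 : HasDerivAt F
        ((∑ l, ((2 * ∑ m, (X - toMat (A s) * toMat (B s) * X) l m * (toMat (B s) * X) i m)
            * A s (l, j)
          + A s (l, i) * (2 * ∑ m, (X - toMat (A s) * toMat (B s) * X) l m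
            * (toMat (B s) * X) j m)))
        - (∑ q, ((2 * ∑ l, ∑ m, (X - toMat (A s) * toMat (B s) * X) l m * (A s (l, i) * X q m))
            * B s (j, q)
          + B s (i, q) * (2 * ∑ l, ∑ m, (X - toMat (A s) * toMat (B s) * X) l m
            * (A s (l, j) * X q m))))) s := by
      exact (HasDerivAt.fun_sum fun l _ => (hAe (l, i)).mul (hAe (l, j))).sub
        (HasDerivAt.fun_sum fun q _ => (hBe (i, q)).mul (hBe (j, q)))
    rwa [keyident (X - toMat (A s) * toMat (B s) * X) X (A s) (B s) i j] at hF1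
  have hcont : ContinuousOn F (Set.Icc 0 t) := fun u hu =>
    ((key u hu.1).continuousAt).continuousWithinAt
  have hconst := constant_of_has_deriv_right_zero hcont
    (fun u hu => ((key u hu.1).hasDerivWithinAt))
  have hFt : F t = F 0 := hconst t ⟨ht, le_refl t⟩
  simp only [Matrix.sub_apply, Matrix.mul_apply, Matrix.transpose_apply, toMat,
    Matrix.of_apply]
  exact hFt
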